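/- Positive definiteness of the correction matrix: let V be an N×N real orthogonal matrix and let S be an N×N real matrix with S_{kℓ} > 0 for all k, ℓ. Define M_{ij} := Σ_{k,ℓ} V_{ik} V_{jk} S_{kℓ} V_{jℓ} V_{iℓ}. If S is symmetric, then M is a symmetric positive-definite matrix; in particular M has full rank. -/

import Mathlib

open Matrix

lemma sum4_comm {N : ℕ} (f : Fin N → Fin N → Fin N → Fin N → ℝ) :
    ∑ k, ∑ l, ∑ i, ∑ j, f k l i j = ∑ i, ∑ j, ∑ k, ∑ l, f k l i j := by
  calc ∑ k, ∑ l, ∑ i, ∑ j, f k l i j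
      = ∑ k, ∑ i, ∑ l, ∑ j, f k l i j :=
        Finset.sum_congr rfl fun k _ => Finset.sum_comm
    _ = ∑ i, ∑ k, ∑ l, ∑ j, f k l i j := Finset.sum_comm
    _ = ∑ i, ∑ k, ∑ j, ∑ l, f k l i j :=
        Finset.sum_congr rfl fun i _ => Finset.sum_congr rfl fun k _ => Finset.sum_comm
    _ = ∑ i, ∑ j, ∑ k, ∑ l, f k l i j :=
        Finset.sum_congr rfl fun i _ => Finset.sum_comm

lemma sumsq_key {N : ℕ} (V : Matrix (Fin N) (Fin N) ℝ) (hVVt : V * Vᵀ = 1) (x : Fin N → ℝ) :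
    ∑ k, ∑ l, (∑ i, x i * V i k * V i l)^2 = ∑ i, x i ^ 2 := by
  have h1 : ∀ i j : Fin N, (V * Vᵀ) i j = ∑ k, V i k * V j k := by
    intro i j; simp [Matrix.mul_apply]
  calc ∑ k, ∑ l, (∑ i, x i * V i k * V i l)^2
      = ∑ k, ∑ l, ∑ i, ∑ j, (x i * V i k * V i l) * (x j * V j k * V j l) := by
        refine Finset.sum_congr rfl fun k _ => Finset.sum_congr rfl fun l _ => ?_
        rw [sq, Finset.sum_mul_sum]
    _ = ∑ i, ∑ j, ∑ k, ∑ l, (x i * V i k * V i l) * (x j * V j k * V j l) :=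
        sum4_comm _
    _ = ∑ i, ∑ j, (x i * x j) * ((∑ k, V i k * V j k) * (∑ l, V i l * V j l)) := by
        refine Finset.sum_congr rfl fun i _ => Finset.sum_congr rfl fun j _ => ?_
        conv_rhs => rw [Finset.sum_mul_sum, Finset.mul_sum]
        refine Finset.sum_congr rfl fun k _ => ?_
        rw [Finset.mul_sum]
        exact Finset.sum_congr rfl fun l _ => by ring
    _ = ∑ i, ∑ j, (x i * x j) * ((1 : Matrix (Fin N) (Fin N) ℝ) i j * (1:Matrix (Fin N) (Fin N) ℝ) i j) := by
        simp only [← h1, hVVt]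
    _ = ∑ i, x i ^ 2 := by
        simp [Matrix.one_apply, Finset.sum_ite_eq, sq, mul_ite]

lemma quadform_key {N : ℕ} (V S M : Matrix (Fin N) (Fin N) ℝ)
    (hM : ∀ i j, M i j = ∑ k, ∑ l, V i k * V j k * S k l * V j l * V i l)
    (x : Fin N → ℝ) :
    x ⬝ᵥ M.mulVec x = ∑ k, ∑ l, S k l * (∑ i, x i * V i k * V i l)^2 := by
  calc x ⬝ᵥ M.mulVec x
      = ∑ i, ∑ j, ∑ k, ∑ l, x i * (V i k * V j k * S k l * V j l * V i l) * x j := by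
        simp only [dotProduct, Matrix.mulVec, hM, Finset.sum_mul, Finset.mul_sum]
        refine Finset.sum_congr rfl fun i _ => Finset.sum_congr rfl fun j _ =>
          Finset.sum_congr rfl fun k _ => Finset.sum_congr rfl fun l _ => by ring
    _ = ∑ k, ∑ l, ∑ i, ∑ j, x i * (V i k * V j k * S k l * V j l * V i l) * x j :=
        (sum4_comm _).symm
    _ = ∑ k, ∑ l, S k l * (∑ i, x i * V i k * V i l)^2 := by
        refine Finset.sum_congr rfl fun k _ => Finset.sum_congr rfl fun l _ => ?_
        rw [sq, Finset.sum_mul_sum, Finset.mul_sum]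
        refine Finset.sum_congr rfl fun i _ => ?_
        rw [Finset.mul_sum]
        exact Finset.sum_congr rfl fun j _ => by ring

/-- Positive definiteness of the correction matrix: for `V` orthogonal and `S` symmetric
with positive entries, `M_{ij} := ∑_{k,ℓ} V_{ik} V_{jk} S_{kℓ} V_{jℓ} V_{iℓ}` is symmetric
positive-definite; in particular `M` has full rank. -/
theorem correction_matrix_positive_definite
    (N : ℕ) (V : Matrix (Fin N) (Fin N) ℝ)
    (hVorth : Vᵀ * V = 1)
    (S : Matrix (Fin N) (Fin N) ℝ)
    (hSpos : ∀ k l, 0 < S k l)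
    (hSsymm : ∀ k l, S k l = S l k)
    (M : Matrix (Fin N) (Fin N) ℝ)
    (hM : ∀ i j, M i j = ∑ k, ∑ l, V i k * V j k * S k l * V j l * V i l) :
    (∀ i j, M i j = M j i) ∧ (∀ x : Fin N → ℝ, x ≠ 0 → 0 < x ⬝ᵥ M.mulVec x) ∧
      M.rank = N := by
  have hVVt : V * Vᵀ = 1 := mul_eq_one_comm.mp hVorth
  have hsymm : ∀ i j, M i j = M j i := by
    intro i j
    rw [hM, hM]
    exact Finset.sum_congr rfl fun k _ => Finset.sum_congr rfl fun l _ => by ring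
  have hpos : ∀ x : Fin N → ℝ, x ≠ 0 → 0 < x ⬝ᵥ M.mulVec x := by
    intro x hx
    rw [quadform_key V S M hM x]
    set A : Fin N → Fin N → ℝ := fun k l => ∑ i, x i * V i k * V i l with hA
    have hsum : ∑ k, ∑ l, (A k l)^2 = ∑ i, x i ^ 2 := sumsq_key V hVVt x
    obtain ⟨i0, hi0⟩ := Function.ne_iff.mp hx
    have hx2 : 0 < ∑ i, x i ^ 2 := by
      have hi0' : x i0 ≠ 0 := hi0
      have : 0 < x i0 ^ 2 := lt_of_le_of_ne (sq_nonneg _) (Ne.symm (pow_ne_zero 2 hi0'))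
      refine lt_of_lt_of_le this ?_
      exact Finset.single_le_sum (fun i _ => sq_nonneg (x i)) (Finset.mem_univ i0)
    have hAne : ∃ k l, A k l ≠ 0 := by
      by_contra h
      push_neg at h
      have : ∑ k, ∑ l, (A k l)^2 = 0 := by
        simp only [fun k l => h k l]; simp
      rw [hsum] at this
      exact absurd this hx2.ne'
    obtain ⟨k0, l0, hkl⟩ := hAne
    refine Finset.sum_pos' (fun k _ => Finset.sum_nonneg fun l _ =>
      mul_nonneg (hSpos k l).le (sq_nonneg _)) ⟨k0, Finset.mem_univ k0, ?_⟩
    refine Finset.sum_pos' (fun l _ => mul_nonneg (hSpos k0 l).le (sq_nonneg _))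
      ⟨l0, Finset.mem_univ l0, ?_⟩
    exact mul_pos (hSpos k0 l0)
      (lt_of_le_of_ne (sq_nonneg _) (Ne.symm (pow_ne_zero 2 hkl)))
  refine ⟨hsymm, hpos, ?_⟩
  have hPD : M.PosDef := by
    constructor
    · ext i j
      rw [Matrix.conjTranspose_apply, star_trivial]
      exact hsymm j i
    · intro x hx
      have := hpos x (by simpa using hx)
      simpa [dotProduct, mulVec, Finsupp.sum_fintype, Finset.mul_sum, mul_assoc] using this
  rw [Matrix.rank_of_isUnit M hPD.isUnit]
  simp
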